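/- arXiv:1911.03026 — 7 statements merged into one kernel-verified Lean document; each statement's English description precedes it below -/
import Mathlib

section
/- For integers n ≥ k ≥ 2, the minimum size of a k-path vertex cover of the cycle C_n on n vertices equals ⌈n/k⌉. -/
/-- `I` is a `k`-path vertex cover of the cycle `C_n` on vertices `0, …, n-1`:
`I ⊆ {0,…,n-1}` and every block of `k` cyclically consecutive vertices meets `I`. -/
def CyclePVC (k n : ℕ) (I : Finset ℕ) : Prop :=
  I ⊆ Finset.range n ∧ ∀ a < n, ∃ t < k, (a + t) % n ∈ I

lemma ceil_le_iff (k x s : ℕ) (hk : 0 < k) : (x + k - 1) / k ≤ s ↔ x ≤ s * k := by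
  rw [Nat.div_le_iff_le_mul_add_pred hk, Nat.mul_comm]
  omega

/-- For `n ≥ k ≥ 2`, the minimum size of a `k`-path vertex cover of `C_n` is `⌈n/k⌉`. -/
theorem psi_cycle (k n : ℕ) (hk : 2 ≤ k) (hn : k ≤ n) :
    IsLeast {s : ℕ | ∃ I : Finset ℕ, CyclePVC k n I ∧ I.card = s} ((n + k - 1) / k) := by
  have hk0 : 0 < k := by omega
  set m := (n + k - 1) / k with hm
  have hmk : n ≤ m * k := (ceil_le_iff k n m hk0).mp le_rfl
  have hm1 : 1 ≤ m := by
    rw [hm, Nat.le_div_iff_mul_le hk0, one_mul]; omega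
  have hmk' : (m - 1) * k < n := by
    by_contra h
    push_neg at h
    have := (ceil_le_iff k n (m - 1) hk0).mpr h
    omega
  constructor
  · -- membership: the cover {0, k, 2k, ..., (m-1)k}
    refine ⟨(Finset.range m).image (· * k), ⟨?_, ?_⟩, ?_⟩
    · intro x hx
      simp only [Finset.mem_image, Finset.mem_range] at hx
      obtain ⟨i, hi, rfl⟩ := hx
      rw [Finset.mem_range]
      calc i * k ≤ (m - 1) * k := Nat.mul_le_mul_right k (by omega)
        _ < n := hmk'
    · intro a ha
      by_cases hw : a + k ≤ n
      · -- no wrap: a ≤ qk ≤ a+k-1 for q = ⌈a/k⌉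
        set q := (a + k - 1) / k with hq
        have hq1 : a ≤ q * k := (ceil_le_iff k a q hk0).mp le_rfl
        have hq2 : q * k ≤ a + k - 1 := Nat.div_mul_le_self _ _
        have hqm : q < m := by
          have : q * k < m * k := by omega
          exact Nat.lt_of_mul_lt_mul_right this
        refine ⟨q * k - a, by omega, ?_⟩
        have he : a + (q * k - a) = q * k := by omega
        rw [he, Nat.mod_eq_of_lt (by omega)]
        simp only [Finset.mem_image, Finset.mem_range]
        exact ⟨q, hqm, rfl⟩
      · -- wrap: hit vertex 0
        refine ⟨n - a, by omega, ?_⟩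
        have he : (a + (n - a)) % n = 0 := by
          have : a + (n - a) = n := by omega
          simp [this]
        rw [he]
        simp only [Finset.mem_image, Finset.mem_range]
        exact ⟨0, by omega, by simp⟩
    · rw [Finset.card_image_of_injective _ (fun a b h => by
        exact Nat.eq_of_mul_eq_mul_right hk0 h), Finset.card_range]
  · -- lower bound
    rintro s ⟨I, ⟨hIsub, hIcov⟩, rfl⟩
    classical
    have key : n ≤ I.card * k := by
      set t : ℕ → ℕ := fun a =>
        if h : ∃ t < k, (a + t) % n ∈ I then h.choose else 0 with ht
      have htspec : ∀ a < n, t a < k ∧ (a + t a) % n ∈ I := by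
        intro a ha
        have h := hIcov a ha
        simp only [ht, dif_pos h]
        exact ⟨h.choose_spec.1, h.choose_spec.2⟩
      set f : ℕ → ℕ := fun a => (a + t a) % n with hf
      have hmaps : ∀ a ∈ Finset.range n, f a ∈ I := fun a ha =>
        (htspec a (Finset.mem_range.mp ha)).2
      have hfib : ∀ b ∈ I, ((Finset.range n).filter (fun a => f a = b)).card ≤ k := by
        intro b hb
        have hbn : b < n := Finset.mem_range.mp (hIsub hb)
        have hsub : (Finset.range n).filter (fun a => f a = b) ⊆
            (Finset.range k).image (fun j => (b + n - j) % n) := by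
          intro a ha
          simp only [Finset.mem_filter, Finset.mem_range] at ha
          obtain ⟨han, hfa⟩ := ha
          have htk := (htspec a han).1
          simp only [Finset.mem_image, Finset.mem_range]
          refine ⟨t a, htk, ?_⟩
          have h1 : (a + t a) % n = b := hfa
          rcases Nat.lt_or_ge (a + t a) n with hlt | hge
          · rw [Nat.mod_eq_of_lt hlt] at h1
            have he : b + n - t a = a + n := by omega
            rw [he, Nat.add_mod_right, Nat.mod_eq_of_lt han]
          · have h3 : (a + t a) % n = a + t a - n := by
              rw [Nat.mod_eq_sub_mod hge, Nat.mod_eq_of_lt (by omega)]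
            rw [h3] at h1
            have he : b + n - t a = a := by omega
            rw [he, Nat.mod_eq_of_lt han]
        calc ((Finset.range n).filter (fun a => f a = b)).card
            ≤ ((Finset.range k).image (fun j => (b + n - j) % n)).card :=
              Finset.card_le_card hsub
          _ ≤ (Finset.range k).card := Finset.card_image_le
          _ = k := Finset.card_range k
      have := Finset.card_le_mul_card_image_of_maps_to hmaps k hfib
      rw [Finset.card_range] at this
      rw [Nat.mul_comm] at this
      exact this
    exact (ceil_le_iff k n I.card hk0).mpr key
end

section
/- Let P = v_1 ... v_n be a path, and let I and J be two k-path vertex covers of P with |I| = |J| = s. Write I = {v_{i_1}, ..., v_{i_s}} and J = {v_{j_1}, ..., v_{j_s}} with i_1 < ... < i_s and j_1 < ... < j_s. Then there exists a TS-sequence between I and J, and the minimum length of a TS-sequence between I and J is exactly Σ_{p=1}^{s} |i_p − j_p|. -/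
/-- `I` is a `k`-path vertex cover of the path `P_n` on vertices `1, …, n`. -/
def PathPVC (k n : ℕ) (I : Finset ℕ) : Prop :=
  I ⊆ Finset.Icc 1 n ∧ ∀ a : ℕ, 1 ≤ a → a + k ≤ n + 1 → ∃ j ∈ I, a ≤ j ∧ j < a + k

/-- A token-sliding sequence of length `ℓ` between `k`-path vertex covers `I` and `J`
of the path `P_n`. -/
def PathTSSeq (k n : ℕ) (f : ℕ → Finset ℕ) (ℓ : ℕ) (I J : Finset ℕ) : Prop :=
  f 0 = I ∧ f ℓ = J ∧ (∀ i ≤ ℓ, PathPVC k n (f i)) ∧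
    ∀ i < ℓ, ∃ x y : ℕ, f i \ f (i + 1) = {x} ∧ f (i + 1) \ f i = {y} ∧
      (y = x + 1 ∨ x = y + 1)

namespace PTS
def Dl (A B : List ℕ) : ℕ := (List.zipWith (fun a b => max a b - min a b) A B).sum

lemma dsub (a b : ℕ) : max a b - min a b = (a - b) + (b - a) := by
  rcases Nat.le_total a b with h | h
  · rw [Nat.max_eq_right h, Nat.min_eq_left h]; omega
  · rw [Nat.max_eq_left h, Nat.min_eq_right h]; omega

lemma Dl_nil (B : List ℕ) : Dl [] B = 0 := rfl
lemma Dl_nil' (A : List ℕ) : Dl A [] = 0 := by cases A <;> rfl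
lemma Dl_cons (a b : ℕ) (A B : List ℕ) :
    Dl (a :: A) (b :: B) = (max a b - min a b) + Dl A B := rfl

lemma Dl_self (A : List ℕ) : Dl A A = 0 := by
  induction A with
  | nil => rfl
  | cons a A ih => rw [Dl_cons, ih, dsub]; omega

lemma Dl_comm (A B : List ℕ) : Dl A B = Dl B A := by
  induction A generalizing B with
  | nil => rw [Dl_nil, Dl_nil']
  | cons a A ih =>
    cases B with
    | nil => rw [Dl_nil, Dl_nil']
    | cons b B => rw [Dl_cons, Dl_cons, ih, Nat.max_comm, Nat.min_comm]

lemma Dl_eq_zero (A B : List ℕ) (hlen : A.length = B.length) (h : Dl A B = 0) : A = B := by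
  induction A generalizing B with
  | nil => cases B with | nil => rfl | cons b B => simp at hlen
  | cons a A ih =>
    cases B with
    | nil => simp at hlen
    | cons b B =>
      rw [Dl_cons] at h
      have h1 : max a b - min a b = 0 := by omega
      rw [dsub] at h1
      have hab : a = b := by omega
      rw [hab, ih B (by simpa using hlen) (by omega)]

lemma Dl_map_le (x : ℕ) (A B : List ℕ) :
    Dl (A.map (fun t => if t = x then x + 1 else t)) B ≤ Dl A B + A.count x := by
  induction A generalizing B with
  | nil => simp [Dl_nil]
  | cons a A ih =>
    cases B with
    | nil => simp [Dl_nil']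
    | cons b B =>
      rw [List.map_cons, Dl_cons, Dl_cons, List.count_cons]
      have h1 := ih B
      by_cases ha : a = x
      · subst ha
        simp only [if_pos rfl, dsub, beq_self_eq_true, if_true]
        omega
      · simp only [if_neg ha, beq_iff_eq, ha, if_false]
        omega

lemma Dl_le_map (x : ℕ) (A B : List ℕ) :
    Dl A B ≤ Dl (A.map (fun t => if t = x then x + 1 else t)) B + A.count x := by
  induction A generalizing B with
  | nil => simp [Dl_nil]
  | cons a A ih =>
    cases B with
    | nil => simp [Dl_nil']
    | cons b B =>
      rw [List.map_cons, Dl_cons, Dl_cons, List.count_cons]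
      have h1 := ih B
      by_cases ha : a = x
      · subst ha
        simp only [if_pos rfl, dsub, beq_self_eq_true, if_true]
        omega
      · simp only [if_neg ha, beq_iff_eq, ha, if_false]
        omega
lemma Dl_map_eq (x : ℕ) : ∀ (q : ℕ) (A B : List ℕ), A.length = B.length →
    q < A.length → A.getD q 0 = x → x < B.getD q 0 →
    (∀ r, r < A.length → A.getD r 0 = x → r = q) →
    Dl (A.map (fun t => if t = x then x + 1 else t)) B + 1 = Dl A B := by
  intro q
  induction q with
  | zero =>
    intro A B hlen hq hAq hBq huniq
    cases A with
    | nil => simp at hq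
    | cons a A =>
      cases B with
      | nil => simp at hlen
      | cons b B =>
        rw [List.getD_cons_zero] at hAq hBq
        subst hAq
        have hmap : A.map (fun t => if t = a then a + 1 else t) = A := by
          conv_rhs => rw [← List.map_id A]
          apply List.map_congr_left
          intro t ht
          simp only [id]
          rw [if_neg]
          intro h
          subst h
          obtain ⟨r, hr, hrt⟩ := List.mem_iff_getElem.mp ht
          have : r + 1 = 0 := huniq (r + 1) (by simpa using hr)
            (by rw [List.getD_cons_succ, List.getD_eq_getElem _ _ hr, hrt])
          omega
        rw [List.map_cons, hmap, Dl_cons, Dl_cons, if_pos rfl, dsub, dsub]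
        omega
  | succ q ih =>
    intro A B hlen hq hAq hBq huniq
    cases A with
    | nil => simp at hq
    | cons a A =>
      cases B with
      | nil => simp at hlen
      | cons b B =>
        have ha : a ≠ x := by
          intro h
          have : (0 : ℕ) = q + 1 := huniq 0 (by simp) (by rwa [List.getD_cons_zero])
          omega
        rw [List.map_cons, if_neg ha, Dl_cons, Dl_cons]
        rw [List.getD_cons_succ] at hAq hBq
        have := ih A B (by simpa using hlen) (by simpa using hq) hAq hBq
          (fun r hr hrx => by
            have : r + 1 = q + 1 := huniq (r + 1) (by simpa using hr)
              (by rwa [List.getD_cons_succ])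
            omega)
        omega

def srt (I : Finset ℕ) : List ℕ := I.sort (· ≤ ·)

lemma srt_sorted (I : Finset ℕ) : (srt I).Pairwise (· < ·) := (Finset.sortedLT_sort I).pairwise

lemma mem_srt {I : Finset ℕ} {a : ℕ} : a ∈ srt I ↔ a ∈ I := Finset.mem_sort _

lemma length_srt (I : Finset ℕ) : (srt I).length = I.card := Finset.length_sort _

lemma srt_inj {I J : Finset ℕ} (h : srt I = srt J) : I = J := by
  have := congrArg List.toFinset h
  simp only [srt] at this
  rwa [Finset.sort_toFinset, Finset.sort_toFinset] at this

lemma getD_lt_getD {A : List ℕ} (hA : A.Pairwise (· < ·)) {r t : ℕ}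
    (hrt : r < t) (ht : t < A.length) : A.getD r 0 < A.getD t 0 := by
  have h := List.pairwise_iff_getElem.mp hA r t (lt_trans hrt ht) ht hrt
  rwa [List.getD_eq_getElem _ _ (lt_trans hrt ht), List.getD_eq_getElem _ _ ht]

lemma getD_add_le {A : List ℕ} (hA : A.Pairwise (· < ·)) {r t : ℕ}
    (hrt : r ≤ t) (ht : t < A.length) : A.getD r 0 + (t - r) ≤ A.getD t 0 := by
  induction t, hrt using Nat.le_induction with
  | base => omega
  | succ t h ih =>
    have ht' : t < A.length := by omega
    have h1 := ih ht'
    have h2 : A.getD t 0 < A.getD (t + 1) 0 := getD_lt_getD hA (Nat.lt_succ_self t) ht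
    omega

lemma mem_iff_getD {A : List ℕ} {t : ℕ} : t ∈ A ↔ ∃ r, r < A.length ∧ A.getD r 0 = t := by
  rw [List.mem_iff_getElem]
  constructor
  · rintro ⟨r, hr, hrt⟩; exact ⟨r, hr, by rw [List.getD_eq_getElem _ _ hr, hrt]⟩
  · rintro ⟨r, hr, hrt⟩; exact ⟨r, hr, by rw [← List.getD_eq_getElem _ _ hr, hrt]⟩

lemma getD_mem {A : List ℕ} {r : ℕ} (hr : r < A.length) : A.getD r 0 ∈ A :=
  mem_iff_getD.mpr ⟨r, hr, rfl⟩

/-- Sorting a finset after a rightward token move is the pointwise-modified sorted list. -/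
lemma sort_move (I : Finset ℕ) (x : ℕ) (hx : x ∈ I) (hx1 : x + 1 ∉ I) :
    srt (insert (x + 1) (I.erase x)) = (srt I).map (fun t => if t = x then x + 1 else t) := by
  set f : ℕ → ℕ := fun t => if t = x then x + 1 else t with hf
  have key : ∀ {l1 l2 : List ℕ}, l1.Perm l2 → l1.Pairwise (· ≤ ·) → l2.Pairwise (· ≤ ·) → l1 = l2 :=
    fun hp h1 h2 => List.Perm.eq_of_pairwise' h1 h2 hp
  apply key
  · -- permutation
    have h1 : (insert (x + 1) (I.erase x)).val = (x + 1) ::ₘ I.val.erase x := by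
      rw [Finset.insert_val_of_notMem (by simp [hx1]), Finset.erase_val]
    have h2 : Multiset.map f I.val = (x + 1) ::ₘ I.val.erase x := by
      conv_lhs => rw [← Multiset.cons_erase hx]
      rw [Multiset.map_cons]
      have hfx : f x = x + 1 := by simp [hf]
      rw [hfx]
      congr 1
      have hcong : ∀ a ∈ I.val.erase x, f a = a := by
        intro a ha
        have hax : a ≠ x := by
          intro h; subst h
          exact (I.nodup.notMem_erase) ha
        simp [hf, hax]
      calc Multiset.map f (I.val.erase x) = Multiset.map id (I.val.erase x) :=
            Multiset.map_congr rfl hcong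
        _ = I.val.erase x := Multiset.map_id _
    apply Multiset.coe_eq_coe.mp
    have e1 : (↑(srt (insert (x + 1) (I.erase x))) : Multiset ℕ) =
        (insert (x + 1) (I.erase x)).val := Finset.sort_eq _ _
    have e2 : (↑((srt I).map f) : Multiset ℕ) = Multiset.map f I.val := by
      rw [← Multiset.map_coe]
      congr 1
      exact Finset.sort_eq _ _
    rw [e1, e2, h1, h2]
  · exact Finset.pairwise_sort _ _
  · -- sortedness of mapped list
    rw [List.pairwise_map]
    apply List.Pairwise.imp_of_mem ?_ (srt_sorted I)
    intro a b ha hb hab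
    have hbI : b ∈ I := mem_srt.mp hb
    by_cases hax : a = x
    · subst hax
      have hbx : b ≠ a + 1 := fun h => hx1 (h ▸ hbI)
      simp only [hf, if_pos rfl, if_neg (by omega : b ≠ a)]
      omega
    · by_cases hbx : b = x
      · subst hbx
        simp only [hf, if_neg hax, if_pos rfl]
        omega
      · simp only [hf, if_neg hax, if_neg hbx]
        omega

def DD (I J : Finset ℕ) : ℕ := Dl (srt I) (srt J)

lemma DD_comm (I J : Finset ℕ) : DD I J = DD J I := Dl_comm _ _

lemma step (k n : ℕ) (hk : 2 ≤ k) (I J : Finset ℕ) (hI : PathPVC k n I) (hJ : PathPVC k n J)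
    (hlen : (srt I).length = (srt J).length) (p : ℕ) (hp : p < (srt I).length)
    (hmin : ∀ r < p, (srt I).getD r 0 = (srt J).getD r 0)
    (hlt : (srt I).getD p 0 < (srt J).getD p 0) :
    ∃ x, x ∈ I ∧ x + 1 ∉ I ∧ PathPVC k n (insert (x + 1) (I.erase x)) ∧
      DD (insert (x + 1) (I.erase x)) J + 1 = DD I J := by
  obtain ⟨mq, hmq⟩ : ∃ mq, mq = Nat.findGreatest
      (fun m => p + m < (srt I).length ∧ (srt I).getD (p + m) 0 = (srt I).getD p 0 + m)
      (srt I).length := ⟨_, rfl⟩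
  have hPmq : p + mq < (srt I).length ∧
      (srt I).getD (p + mq) 0 = (srt I).getD p 0 + mq := by
    rw [hmq]
    exact Nat.findGreatest_spec
      (P := fun m => p + m < (srt I).length ∧ (srt I).getD (p + m) 0 = (srt I).getD p 0 + m)
      (Nat.zero_le _) ⟨by omega, by simp⟩
  obtain ⟨hqs, hxval⟩ := hPmq
  have hxI : (srt I).getD (p + mq) 0 ∈ I := mem_srt.mp (getD_mem hqs)
  have hx1 : (srt I).getD (p + mq) 0 + 1 ∉ I := by
    intro hmem
    obtain ⟨r, hr, hrx⟩ := mem_iff_getD.mp (mem_srt.mpr hmem)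
    have hqr : p + mq < r := by
      by_contra h
      push_neg at h
      rcases eq_or_lt_of_le h with h' | h'
      · rw [h'] at hrx; omega
      · have := getD_lt_getD (srt_sorted I) h' hqs
        rw [hrx] at this; omega
    have hreq : r = p + mq + 1 := by
      by_contra h
      have hq1r : p + mq + 1 < r := by omega
      have l1 := getD_lt_getD (srt_sorted I) (by omega : p + mq < p + mq + 1) (lt_trans hq1r hr)
      have l2 := getD_lt_getD (srt_sorted I) hq1r hr
      rw [hrx] at l2; omega
    have hng := Nat.findGreatest_is_greatest
      (P := fun m => p + m < (srt I).length ∧ (srt I).getD (p + m) 0 = (srt I).getD p 0 + m)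
      (n := (srt I).length) (k := mq + 1) (by omega) (by omega)
    apply hng
    refine ⟨by omega, ?_⟩
    have hpr : p + (mq + 1) = r := by omega
    rw [hpr, hrx]; omega
  have hBq : (srt I).getD (p + mq) 0 + 1 ≤ (srt J).getD (p + mq) 0 := by
    have h1 : (srt J).getD p 0 + ((p + mq) - p) ≤ (srt J).getD (p + mq) 0 :=
      getD_add_le (srt_sorted J) (by omega) (by omega)
    omega
  have hBqJ : (srt J).getD (p + mq) 0 ∈ J := mem_srt.mp (getD_mem (by omega))
  have hxn : (srt I).getD (p + mq) 0 + 1 ≤ n := by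
    have := hJ.1 hBqJ
    simp only [Finset.mem_Icc] at this
    omega
  have hxge1 : 1 ≤ (srt I).getD (p + mq) 0 := by
    have := hI.1 hxI
    simp only [Finset.mem_Icc] at this
    omega
  refine ⟨(srt I).getD (p + mq) 0, hxI, hx1, ⟨?_, ?_⟩, ?_⟩
  · intro t ht
    simp only [Finset.mem_insert, Finset.mem_erase] at ht
    rcases ht with rfl | ⟨-, ht⟩
    · simp only [Finset.mem_Icc]; omega
    · exact hI.1 ht
  · intro a ha hak
    by_cases hex : ∃ j ∈ I, (a ≤ j ∧ j < a + k) ∧ j ≠ (srt I).getD (p + mq) 0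
    · obtain ⟨j, hjI, ⟨hja, hjk⟩, hjx⟩ := hex
      exact ⟨j, Finset.mem_insert.mpr (Or.inr (Finset.mem_erase.mpr ⟨hjx, hjI⟩)), hja, hjk⟩
    · push_neg at hex
      obtain ⟨j, hjI, hja, hjk⟩ := hI.2 a ha hak
      have hjx : j = (srt I).getD (p + mq) 0 := hex j hjI ⟨hja, hjk⟩
      subst hjx
      by_cases hxk : (srt I).getD (p + mq) 0 + 1 < a + k
      · exact ⟨(srt I).getD (p + mq) 0 + 1, Finset.mem_insert_self _ _, by omega, hxk⟩
      · have hax : a + k = (srt I).getD (p + mq) 0 + 1 := by omega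
        exfalso
        rcases Nat.eq_zero_or_pos mq with hmq0 | hmq0
        · obtain ⟨jb, hjbJ, hjba, hjbk⟩ := hJ.2 a ha hak
          obtain ⟨r, hr, hrb⟩ := mem_iff_getD.mp (mem_srt.mpr hjbJ)
          have hxAp : (srt I).getD (p + mq) 0 = (srt I).getD p 0 := by omega
          have hrp : r < p := by
            by_contra h
            push_neg at h
            have hle : (srt J).getD p 0 ≤ (srt J).getD r 0 := by
              rcases eq_or_lt_of_le h with h' | h'
              · rw [← h']
              · exact le_of_lt (getD_lt_getD (srt_sorted J) h' (by omega))
            omega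
          have hAr := hmin r hrp
          have hArx : (srt I).getD r 0 < (srt I).getD p 0 :=
            getD_lt_getD (srt_sorted I) hrp hp
          have hArI : (srt I).getD r 0 ∈ I := mem_srt.mp (getD_mem (by omega))
          have := hex _ hArI ⟨by omega, by omega⟩
          omega
        · have l1 : (srt I).getD p 0 + ((p + mq - 1) - p) ≤ (srt I).getD (p + mq - 1) 0 :=
            getD_add_le (srt_sorted I) (by omega) (by omega)
          have l2 : (srt I).getD (p + mq - 1) 0 < (srt I).getD (p + mq) 0 :=
            getD_lt_getD (srt_sorted I) (by omega) (by omega)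
          have hmem : (srt I).getD (p + mq) 0 - 1 ∈ I := by
            have hAq1 : (srt I).getD (p + mq - 1) 0 = (srt I).getD (p + mq) 0 - 1 := by omega
            rw [← hAq1]; exact mem_srt.mp (getD_mem (by omega))
          have := hex _ hmem ⟨by omega, by omega⟩
          omega
  · have hsort := sort_move I _ hxI hx1
    show Dl (srt (insert _ (I.erase _))) (srt J) + 1 = Dl (srt I) (srt J)
    rw [hsort]
    apply Dl_map_eq _ (p + mq) _ _ hlen (by omega) rfl (by omega)
    intro r hr hrx
    by_contra h
    rcases Nat.lt_or_ge r (p + mq) with h' | h'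
    · have := getD_lt_getD (srt_sorted I) h' (by omega); omega
    · have hq' : p + mq < r := by omega
      have := getD_lt_getD (srt_sorted I) hq' (by omega)
      rw [hrx] at this; omega

lemma move_mem (S : Finset ℕ) (x : ℕ) (hx : x ∈ S) (h1 : x + 1 ∉ S) :
    S \ insert (x + 1) (S.erase x) = {x} ∧ insert (x + 1) (S.erase x) \ S = {x + 1} := by
  constructor
  · ext t
    simp only [Finset.mem_sdiff, Finset.mem_insert, Finset.mem_erase, Finset.mem_singleton]
    constructor
    · rintro ⟨htS, hne⟩
      by_contra htx
      exact hne (Or.inr ⟨htx, htS⟩)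
    · rintro rfl
      refine ⟨hx, ?_⟩
      rintro (h | ⟨h2, -⟩)
      · omega
      · exact h2 rfl
  · ext t
    simp only [Finset.mem_sdiff, Finset.mem_insert, Finset.mem_erase, Finset.mem_singleton]
    constructor
    · rintro ⟨h | ⟨h2, h3⟩, htS⟩
      · exact h
      · exact absurd h3 htS
    · rintro rfl
      exact ⟨Or.inl rfl, h1⟩

lemma move_card (S : Finset ℕ) (x : ℕ) (hx : x ∈ S) (h1 : x + 1 ∉ S) :
    (insert (x + 1) (S.erase x)).card = S.card := by
  rw [Finset.card_insert_of_notMem (fun h => h1 (Finset.mem_of_mem_erase h)),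
    Finset.card_erase_of_mem hx]
  have := Finset.card_pos.mpr ⟨x, hx⟩
  omega

lemma eq_of_getD (A B : List ℕ) (hlen : A.length = B.length)
    (h : ∀ i, A.getD i 0 = B.getD i 0) : A = B := by
  apply List.ext_getElem hlen
  intro i h1 h2
  have := h i
  rwa [List.getD_eq_getElem _ _ h1, List.getD_eq_getElem _ _ h2] at this

lemma eq_insert_erase_of_sdiff {S S' : Finset ℕ} {x y : ℕ}
    (h1 : S \ S' = {x}) (h2 : S' \ S = {y}) : S' = insert y (S.erase x) := by
  have hx : x ∈ S ∧ x ∉ S' := by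
    have : x ∈ S \ S' := h1 ▸ Finset.mem_singleton_self x
    simpa [Finset.mem_sdiff] using this
  have hy : y ∈ S' ∧ y ∉ S := by
    have : y ∈ S' \ S := h2 ▸ Finset.mem_singleton_self y
    simpa [Finset.mem_sdiff] using this
  ext t
  simp only [Finset.mem_insert, Finset.mem_erase]
  constructor
  · intro ht
    by_cases hts : t ∈ S
    · right
      refine ⟨?_, hts⟩
      rintro rfl
      exact hx.2 ht
    · left
      have : t ∈ S' \ S := Finset.mem_sdiff.mpr ⟨ht, hts⟩
      rw [h2] at this
      simpa using this
  · rintro (rfl | ⟨htx, hts⟩)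
    · exact hy.1
    · by_contra h
      have : t ∈ S \ S' := Finset.mem_sdiff.mpr ⟨hts, h⟩
      rw [h1] at this
      simp at this
      exact htx this

lemma DD_move_le {S S' J : Finset ℕ} {x y : ℕ}
    (h1 : S \ S' = {x}) (h2 : S' \ S = {y}) (hxy : y = x + 1 ∨ x = y + 1) :
    DD S J ≤ DD S' J + 1 := by
  have hx : x ∈ S ∧ x ∉ S' := by
    have : x ∈ S \ S' := h1 ▸ Finset.mem_singleton_self x
    simpa [Finset.mem_sdiff] using this
  have hy : y ∈ S' ∧ y ∉ S := by
    have : y ∈ S' \ S := h2 ▸ Finset.mem_singleton_self y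
    simpa [Finset.mem_sdiff] using this
  rcases hxy with rfl | rfl
  · have hS' : S' = insert (x + 1) (S.erase x) := eq_insert_erase_of_sdiff h1 h2
    have hsort : srt S' = (srt S).map (fun t => if t = x then x + 1 else t) := by
      rw [hS']; exact sort_move S x hx.1 hy.2
    have hcount : (srt S).count x ≤ 1 := (List.nodup_iff_count_le_one.mp (Finset.sort_nodup S (fun a b => a ≤ b))) x
    have hle := Dl_le_map x (srt S) (srt J)
    show Dl (srt S) (srt J) ≤ Dl (srt S') (srt J) + 1
    rw [hsort]
    omega
  · have hS : S = insert (y + 1) (S'.erase y) := eq_insert_erase_of_sdiff h2 h1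
    have hsort : srt S = (srt S').map (fun t => if t = y then y + 1 else t) := by
      rw [hS]; exact sort_move S' y hy.1 hx.2
    have hcount : (srt S').count y ≤ 1 := (List.nodup_iff_count_le_one.mp (Finset.sort_nodup S' (fun a b => a ≤ b))) y
    have hle := Dl_map_le y (srt S') (srt J)
    show Dl (srt S) (srt J) ≤ Dl (srt S') (srt J) + 1
    rw [hsort]
    omega

lemma lower (k n : ℕ) : ∀ (ℓ : ℕ) (I J : Finset ℕ) (f : ℕ → Finset ℕ),
    PathTSSeq k n f ℓ I J → DD I J ≤ ℓ := by
  intro ℓ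
  induction ℓ with
  | zero =>
    intro I J f h
    obtain ⟨h0, hl, -, -⟩ := h
    have hIJ : I = J := by rw [← h0, hl]
    rw [hIJ]
    simpa [DD] using (Dl_self (srt J)).le
  | succ ℓ ih =>
    intro I J f h
    obtain ⟨h0, hl, hpvc, hmv⟩ := h
    obtain ⟨x, y, hd1, hd2, hxy⟩ := hmv 0 (Nat.succ_pos ℓ)
    have htail : PathTSSeq k n (fun i => f (i + 1)) ℓ (f 1) J :=
      ⟨rfl, hl, fun i hi => hpvc (i + 1) (by omega), fun i hi => hmv (i + 1) (by omega)⟩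
    have h1 := ih (f 1) J _ htail
    have h2 : DD (f 0) J ≤ DD (f 1) J + 1 := DD_move_le hd1 hd2 hxy
    rw [← h0]
    omega

lemma exists_seq (k n : ℕ) (hk : 2 ≤ k) :
    ∀ (m : ℕ) (I J : Finset ℕ), PathPVC k n I → PathPVC k n J → I.card = J.card →
    DD I J = m → ∃ f, PathTSSeq k n f m I J := by
  intro m
  induction m with
  | zero =>
    intro I J hI hJ hc hD
    have hsrt : srt I = srt J := Dl_eq_zero _ _ (by rw [length_srt, length_srt, hc]) hD
    have hIJ : I = J := srt_inj hsrt
    subst hIJ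
    exact ⟨fun _ => I, rfl, rfl, fun i _ => hI, fun i hi => absurd hi (by omega)⟩
  | succ m ih =>
    intro I J hI hJ hc hD
    have hlen : (srt I).length = (srt J).length := by rw [length_srt, length_srt, hc]
    have hne : srt I ≠ srt J := by
      intro h
      rw [DD, h, Dl_self] at hD
      omega
    have hex : ∃ i, (srt I).getD i 0 ≠ (srt J).getD i 0 := by
      by_contra h
      push_neg at h
      exact hne (eq_of_getD _ _ hlen h)
    obtain ⟨p, hp, hmin⟩ : ∃ p, (srt I).getD p 0 ≠ (srt J).getD p 0 ∧
        ∀ r < p, (srt I).getD r 0 = (srt J).getD r 0 := by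
      refine ⟨Nat.find hex, Nat.find_spec hex, fun r hr => ?_⟩
      by_contra h
      exact Nat.find_min hex hr h
    have hps : p < (srt I).length := by
      by_contra h
      push_neg at h
      rw [List.getD_eq_default _ _ h, List.getD_eq_default _ _ (by omega)] at hp
      exact hp rfl
    rcases Nat.lt_or_ge ((srt I).getD p 0) ((srt J).getD p 0) with hlt | hge
    · obtain ⟨x, hxI, hx1, hpvc', hDD⟩ := step k n hk I J hI hJ hlen p hps hmin hlt
      have hc' : (insert (x + 1) (I.erase x)).card = J.card := by
        rw [move_card I x hxI hx1, hc]
      obtain ⟨f', hf'⟩ := ih (insert (x + 1) (I.erase x)) J hpvc' hJ hc' (by omega)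
      obtain ⟨hsd1, hsd2⟩ := move_mem I x hxI hx1
      refine ⟨fun i => if i = 0 then I else f' (i - 1), by simp, ?_, ?_, ?_⟩
      · simp only [Nat.succ_ne_zero, if_false]
        simpa using hf'.2.1
      · intro i hi
        by_cases h0 : i = 0
        · simpa [h0] using hI
        · simp only [h0, if_false]
          exact hf'.2.2.1 (i - 1) (by omega)
      · intro i hi
        cases i with
        | zero =>
          simp only [if_pos rfl, if_neg Nat.one_ne_zero]
          rw [show (1:ℕ) - 1 = 0 from rfl, hf'.1]
          exact ⟨x, x + 1, hsd1, hsd2, Or.inl rfl⟩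
        | succ j =>
          simp only [Nat.succ_ne_zero, if_false, Nat.succ_sub_one]
          have hmv := hf'.2.2.2 j (by omega)
          simpa [Nat.succ_sub_one] using hmv
    · have hlt' : (srt J).getD p 0 < (srt I).getD p 0 := by omega
      obtain ⟨y, hyJ, hy1, hpvc', hDD⟩ := step k n hk J I hJ hI hlen.symm p (by omega)
        (fun r hr => (hmin r hr).symm) hlt'
      have hDJ' : DD I (insert (y + 1) (J.erase y)) = m := by
        have e1 : DD J I = DD I J := DD_comm _ _
        have e2 : DD (insert (y + 1) (J.erase y)) I = DD I (insert (y + 1) (J.erase y)) :=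
          DD_comm _ _
        omega
      have hc' : I.card = (insert (y + 1) (J.erase y)).card := by
        rw [move_card J y hyJ hy1, hc]
      obtain ⟨f', hf'⟩ := ih I (insert (y + 1) (J.erase y)) hI hpvc' hc' hDJ'
      obtain ⟨hsd1, hsd2⟩ := move_mem J y hyJ hy1
      refine ⟨fun i => if i ≤ m then f' i else J, ?_, ?_, ?_, ?_⟩
      · simpa using hf'.1
      · simp only [if_neg (by omega : ¬ m + 1 ≤ m)]
      · intro i hi
        by_cases h0 : i ≤ m
        · simp only [if_pos h0]; exact hf'.2.2.1 i h0
        · simp only [if_neg h0]; exact hJ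
      · intro i hi
        by_cases h0 : i < m
        · simp only [if_pos (by omega : i ≤ m), if_pos (by omega : i + 1 ≤ m)]
          exact hf'.2.2.2 i h0
        · have him : i = m := by omega
          subst him
          simp only [if_pos (le_refl i), if_neg (by omega : ¬ i + 1 ≤ i)]
          rw [hf'.2.1]
          exact ⟨y + 1, y, hsd2, hsd1, Or.inr rfl⟩

end PTS

/-- On a path, two equal-size `k`-path vertex covers `I = {v_{i_1} < … < v_{i_s}}` and
`J = {v_{j_1} < … < v_{j_s}}` are always reconfigurable under token sliding, and the
minimum length of a TS-sequence is exactly `Σ_p |i_p − j_p|`. -/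
theorem path_ts_shortest (k n s : ℕ) (hk : 2 ≤ k) (hn : k ≤ n) (I J : Finset ℕ)
    (hI : PathPVC k n I) (hJ : PathPVC k n J) (hIs : I.card = s) (hJs : J.card = s) :
    IsLeast {ℓ : ℕ | ∃ f : ℕ → Finset ℕ, PathTSSeq k n f ℓ I J}
      ((List.zipWith (fun a b => max a b - min a b)
        (I.sort (· ≤ ·)) (J.sort (· ≤ ·))).sum) := by
  have hc : I.card = J.card := by rw [hIs, hJs]
  constructor
  · exact PTS.exists_seq k n hk (PTS.DD I J) I J hI hJ hc rfl
  · rintro ℓ ⟨f, hf⟩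
    exact PTS.lower k n ℓ I J f hf
end

section
/- Let T be a tree rooted at r with ψ_k(T) ≥ 1, and let T_v be a properly rooted subtree of T (T_v contains a k-vertex path, but T_v − v does not). Then every k-path vertex cover of T contains at least one vertex of T_v, and consequently ψ_k(T − T_v) = ψ_k(T) − 1, where T − T_v is the forest obtained by deleting all vertices of T_v. -/
/-- `I` is a `k`-path vertex cover of `G`. -/
def IsKPVC {W : Type*} (G : SimpleGraph W) (k : ℕ) (I : Set W) : Prop :=
  ∀ ⦃u v : W⦄ (p : G.Walk u v), p.IsPath → p.length + 1 = k → ∃ x ∈ p.support, x ∈ I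

/-- `G` contains a path on `k` vertices. -/
def HasKPath {W : Type*} (G : SimpleGraph W) (k : ℕ) : Prop :=
  ∃ (u w : W) (p : G.Walk u w), p.IsPath ∧ p.length + 1 = k

/-- The minimum size of a `k`-path vertex cover of `G`. -/
noncomputable def psi {W : Type*} (G : SimpleGraph W) (k : ℕ) : ℕ :=
  sInf {s : ℕ | ∃ I : Set W, IsKPVC G k I ∧ I.ncard = s}

/-- The set of vertices of the subtree `T_v` of the tree `T` rooted at `r`:
`u` is in `T_v` iff `v` lies on the (unique) path from `r` to `u`. -/
def Desc {V : Type*} (T : SimpleGraph V) (r v : V) : Set V :=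
  {u | ∀ p : T.Walk r u, p.IsPath → v ∈ p.support}

/-- `T_v` is properly rooted: `T_v` contains a `k`-vertex path but `T_v − v` does not. -/
def ProperlyRooted {V : Type*} (T : SimpleGraph V) (k : ℕ) (r v : V) : Prop :=
  HasKPath (T.induce (Desc T r v)) k ∧ ¬ HasKPath (T.induce (Desc T r v \ {v})) k


/-- Lift a walk whose support lies in `A` to the induced subgraph on `A`. -/
lemma exists_lift_walk {V : Type*} {G : SimpleGraph V} {A : Set V} :
    ∀ {u w : V} (p : G.Walk u w) (hu : u ∈ A) (hw : w ∈ A),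
      (∀ x ∈ p.support, x ∈ A) →
      ∃ q : (G.induce A).Walk ⟨u, hu⟩ ⟨w, hw⟩, q.support.map Subtype.val = p.support := by
  intro u w p
  induction p with
  | nil => intro hu hw _; exact ⟨.nil, rfl⟩
  | @cons a b c hadj q ih =>
    intro hu hw hs
    obtain ⟨q', hq'⟩ := ih (hs _ (by simp)) hw (fun x hx => hs x (by simp [hx]))
    exact ⟨.cons (by exact hadj) q', by exact congrArg (List.cons a) hq'⟩

/-- A path of `G` contained in `A` gives a `HasKPath` witness in the induced graph. -/
lemma hasKPath_induce_of_path {V : Type*} {G : SimpleGraph V} {A : Set V} {k : ℕ}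
    {u w : V} (p : G.Walk u w) (hp : p.IsPath) (hlen : p.length + 1 = k)
    (hs : ∀ x ∈ p.support, x ∈ A) : HasKPath (G.induce A) k := by
  obtain ⟨q, hq⟩ := exists_lift_walk p (hs _ p.start_mem_support) (hs _ p.end_mem_support) hs
  refine ⟨_, _, q, ?_, ?_⟩
  · rw [SimpleGraph.Walk.isPath_def]
    have : (q.support.map Subtype.val).Nodup := hq ▸ hp.support_nodup
    exact (List.nodup_map_iff Subtype.val_injective).mp this
  · have h1 : q.support.length = p.support.length := by rw [← hq, List.length_map]
    simp only [SimpleGraph.Walk.length_support] at h1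
    omega

/-- key separation fact: a path not containing `v` cannot contain both a vertex in
`Desc T r v` and a vertex outside it. -/
lemma cross_lemma {V : Type*} {T : SimpleGraph V} {r v : V} {u w : V}
    (p : T.Walk u w) {x y : V} (hx : x ∈ p.support) (hy : y ∈ p.support)
    (hxS : x ∈ Desc T r v) (hyS : y ∉ Desc T r v) : v ∈ p.support := by
  classical
  by_contra hv
  simp only [Desc, Set.mem_setOf_eq, not_forall] at hyS
  obtain ⟨q, hq, hqv⟩ := hyS
  -- walk from y to x within the support of p
  let w1 : T.Walk y x := (p.takeUntil y hy).reverse.append (p.takeUntil x hx)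
  have hw1 : ∀ z ∈ w1.support, z ∈ p.support := by
    intro z hz
    simp only [w1, SimpleGraph.Walk.mem_support_append_iff,
      SimpleGraph.Walk.support_reverse, List.mem_reverse] at hz
    rcases hz with hz | hz
    · exact p.support_takeUntil_subset hy hz
    · exact p.support_takeUntil_subset hx hz
  let full : T.Walk r x := q.append w1
  have hfullv : v ∉ full.support := by
    rw [SimpleGraph.Walk.mem_support_append_iff]
    rintro (h | h)
    · exact hqv h
    · exact hv (hw1 _ h)
  have := hxS full.bypass full.bypass_isPath
  exact hfullv (full.support_bypass_subset this)

lemma isKPVC_univ {W : Type*} (G : SimpleGraph W) (k : ℕ) : IsKPVC G k (Set.univ) :=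
  fun u _ p _ _ => ⟨u, p.start_mem_support, Set.mem_univ u⟩

lemma psi_spec {W : Type*} [Finite W] (G : SimpleGraph W) (k : ℕ) :
    ∃ I : Set W, IsKPVC G k I ∧ I.ncard = psi G k := by
  have h : psi G k ∈ {s : ℕ | ∃ I : Set W, IsKPVC G k I ∧ I.ncard = s} :=
    Nat.sInf_mem ⟨(Set.univ : Set W).ncard, Set.univ, isKPVC_univ G k, rfl⟩
  exact h

lemma psi_le {W : Type*} (G : SimpleGraph W) (k : ℕ) {I : Set W} (hI : IsKPVC G k I) :
    psi G k ≤ I.ncard :=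
  Nat.sInf_le ⟨I, hI, rfl⟩


/-- If `T_v` is a properly rooted subtree of a tree `T` with `ψ_k(T) ≥ 1`, then every
`k`-path vertex cover of `T` meets `T_v`, and `ψ_k(T − T_v) = ψ_k(T) − 1`. -/
theorem properly_rooted_subtree {V : Type*} [Fintype V] (T : SimpleGraph V)
    (hT : T.IsTree) (k : ℕ) (hk : 2 ≤ k) (r v : V)
    (hpsi : 1 ≤ psi T k) (hpr : ProperlyRooted T k r v) :
    (∀ I : Set V, IsKPVC T k I → (I ∩ Desc T r v).Nonempty) ∧
    psi (T.induce ((Desc T r v)ᶜ)) k = psi T k - 1 := by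
  set S := Desc T r v with hS
  -- Part 1
  have part1 : ∀ I : Set V, IsKPVC T k I → (I ∩ S).Nonempty := by
    intro I hI
    obtain ⟨u, w, q, hq, hlen⟩ := hpr.1
    -- map q into T
    let f := (SimpleGraph.Embedding.induce S (G := T)).toHom
    have hfinj : Function.Injective f := Subtype.val_injective
    have hp : (q.map f).IsPath := q.map_isPath_of_injective hfinj hq
    have hl : (q.map f).length + 1 = k := by rwa [SimpleGraph.Walk.length_map]
    obtain ⟨x, hxsup, hxI⟩ := hI (q.map f) hp hl
    rw [SimpleGraph.Walk.support_map, List.mem_map] at hxsup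
    obtain ⟨y, _, rfl⟩ := hxsup
    exact ⟨f y, hxI, y.2⟩
  refine ⟨part1, ?_⟩
  -- v ∈ S
  have hvS : v ∈ S := fun p _ => p.end_mem_support
  -- upper bound: psi (induce Sᶜ) ≤ psi T - 1
  obtain ⟨I, hI, hIcard⟩ := psi_spec T k
  have hIfin : I.Finite := Set.toFinite I
  set I' : Set ↥(Sᶜ) := Subtype.val ⁻¹' I with hI'
  have hI'KPVC : IsKPVC (T.induce Sᶜ) k I' := by
    intro a b q hq hlen
    let f := (SimpleGraph.Embedding.induce (Sᶜ) (G := T)).toHom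
    have hfinj : Function.Injective f := Subtype.val_injective
    obtain ⟨x, hxsup, hxI⟩ := hI (q.map f) (q.map_isPath_of_injective hfinj hq)
      (by rwa [SimpleGraph.Walk.length_map])
    rw [SimpleGraph.Walk.support_map, List.mem_map] at hxsup
    obtain ⟨y, hy, rfl⟩ := hxsup
    exact ⟨y, hy, hxI⟩
  have hI'card : I'.ncard ≤ psi T k - 1 := by
    have h1 : I'.ncard = (I ∩ Sᶜ).ncard := by
      rw [hI']
      rw [show Subtype.val ⁻¹' I = Subtype.val ⁻¹' (I ∩ Sᶜ) by
        ext z; simp [z.2]]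
      exact Set.ncard_preimage_of_injective_subset_range Subtype.val_injective
        (by rw [Subtype.range_val]; exact Set.inter_subset_right)
    have h2 : (I ∩ S).ncard + (I \ S).ncard = I.ncard :=
      Set.ncard_inter_add_ncard_diff_eq_ncard I S hIfin
    have h3 : 1 ≤ (I ∩ S).ncard := by
      obtain ⟨x, hx⟩ := part1 I hI
      exact (Set.ncard_pos (Set.toFinite _)).mpr ⟨x, hx⟩
    have h4 : (I ∩ Sᶜ) = I \ S := by ext z; simp [Set.mem_diff]
    rw [h1, h4]
    omega
  have hub : psi (T.induce Sᶜ) k ≤ psi T k - 1 :=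
    le_trans (psi_le _ _ hI'KPVC) hI'card
  -- lower bound: psi T ≤ psi (induce Sᶜ) + 1
  obtain ⟨J, hJ, hJcard⟩ := psi_spec (T.induce Sᶜ) k
  set K : Set V := (Subtype.val '' J) ∪ {v} with hK
  have hKKPVC : IsKPVC T k K := by
    intro a b p hp hlen
    by_cases hvp : v ∈ p.support
    · exact ⟨v, hvp, Or.inr rfl⟩
    by_cases hmeet : ∃ x ∈ p.support, x ∈ S
    · -- all support in S (else cross lemma gives v ∈ support)
      obtain ⟨x, hxsup, hxS⟩ := hmeet
      have hall : ∀ z ∈ p.support, z ∈ S := by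
        intro z hz
        by_contra hzS
        exact hvp (cross_lemma p hxsup hz hxS hzS)
      have hall' : ∀ z ∈ p.support, z ∈ S \ {v} := fun z hz =>
        ⟨hall z hz, fun h => hvp (h ▸ hz)⟩
      exact absurd (hasKPath_induce_of_path p hp hlen hall') hpr.2
    · push_neg at hmeet
      have hall : ∀ z ∈ p.support, z ∈ (Sᶜ : Set V) := fun z hz => hmeet z hz
      have := hasKPath_induce_of_path p hp hlen hall
      -- need the covering vertex; redo the lift explicitly
      obtain ⟨q, hq⟩ := exists_lift_walk p (hall _ p.start_mem_support)
        (hall _ p.end_mem_support) hall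
      have hqpath : q.IsPath := by
        rw [SimpleGraph.Walk.isPath_def]
        have : (q.support.map Subtype.val).Nodup := hq ▸ hp.support_nodup
        exact (List.nodup_map_iff Subtype.val_injective).mp this
      have hqlen : q.length + 1 = k := by
        have h1 : q.support.length = p.support.length := by rw [← hq, List.length_map]
        simp only [SimpleGraph.Walk.length_support] at h1
        omega
      obtain ⟨y, hysup, hyJ⟩ := hJ q hqpath hqlen
      refine ⟨y, ?_, Or.inl ⟨y, hyJ, rfl⟩⟩
      rw [← hq]
      exact List.mem_map_of_mem hysup
  have hlb : psi T k ≤ psi (T.induce Sᶜ) k + 1 := by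
    have h1 : K.ncard ≤ (Subtype.val '' J).ncard + ({v} : Set V).ncard :=
      Set.ncard_union_le _ _
    have h2 : (Subtype.val '' J).ncard = J.ncard :=
      Set.ncard_image_of_injective _ Subtype.val_injective
    have := psi_le T k hKKPVC
    rw [hJcard] at h2
    simp [Set.ncard_singleton] at h1
    omega
  omega
end

section
/- Let T be a tree rooted at r with ψ_k(T) = 1, and let T_v be a properly rooted subtree of T. Then the single vertex v covers all paths on k vertices of T, i.e., {v} is a k-path vertex cover of T. -/
section Aux

variable {V : Type*} {T : SimpleGraph V} {r v : V}

/-- Adjacency step: a neighbor (other than `v`) of a vertex of `Desc T r v \ {v}`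
is again in `Desc T r v`. -/
lemma adj_desc {a b : V} (ha : a ∈ Desc T r v) (hav : a ≠ v)
    (hadj : T.Adj a b) (hbv : b ≠ v) : b ∈ Desc T r v := by
  classical
  intro q hq
  by_cases hmem : a ∈ q.support
  · have h1 := ha (q.takeUntil a hmem) (hq.takeUntil hmem)
    exact q.support_takeUntil_subset hmem h1
  · have hq2 : (q.concat hadj.symm).IsPath := by
      rw [SimpleGraph.Walk.isPath_def, SimpleGraph.Walk.support_concat,
        List.nodup_append]
      refine ⟨hq.support_nodup, List.nodup_singleton a, ?_⟩
      intro x hx y hx' hxy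
      simp only [List.mem_singleton] at hx'
      subst hx'
      subst hxy
      exact hmem hx
    have h1 := ha (q.concat hadj.symm) hq2
    rw [SimpleGraph.Walk.support_concat, List.mem_append] at h1
    rcases h1 with h1 | h1
    · exact h1
    · simp only [List.mem_singleton] at h1
      exact absurd h1.symm hav

/-- Propagation along a walk avoiding `v`. -/
lemma desc_walk {a b : V} (p : T.Walk a b) (hv : v ∉ p.support)
    (ha : a ∈ Desc T r v) : ∀ u ∈ p.support, u ∈ Desc T r v := by
  induction p with
  | nil => intro u hu; simp only [SimpleGraph.Walk.support_nil, List.mem_singleton] at hu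
           exact hu ▸ ha
  | @cons x y z hxy p ih =>
    simp only [SimpleGraph.Walk.support_cons, List.mem_cons] at hv
    push_neg at hv
    have hyd : y ∈ Desc T r v :=
      adj_desc ha (fun hxv => hv.1 hxv.symm) hxy
        (fun hyv => hv.2 (hyv ▸ p.start_mem_support))
    intro u hu
    simp only [SimpleGraph.Walk.support_cons, List.mem_cons] at hu
    rcases hu with rfl | hu
    · exact ha
    · exact ih hv.2 hyd u hu

/-- A walk whose support lies in `s` lifts to the induced graph. -/
lemma walk_induce {s : Set V} : ∀ {a b : V} (p : T.Walk a b)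
    (hs : ∀ u ∈ p.support, u ∈ s),
    ∃ q : (T.induce s).Walk ⟨a, hs a p.start_mem_support⟩ ⟨b, hs b p.end_mem_support⟩,
      q.support.map Subtype.val = p.support ∧ q.length = p.length := by
  intro a b p
  induction p with
  | nil =>
    intro hs
    exact ⟨SimpleGraph.Walk.nil, by simp, by simp⟩
  | @cons x y z hxy p ih =>
    intro hs
    have hs' : ∀ u ∈ p.support, u ∈ s := fun u hu => hs u (by simp [hu])
    obtain ⟨q, hq1, hq2⟩ := ih hs'
    have hadj : (T.induce s).Adj ⟨x, hs x (by simp)⟩ ⟨y, hs' y p.start_mem_support⟩ := hxy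
    exact ⟨SimpleGraph.Walk.cons hadj q, by simp [hq1], by simp [hq2]⟩

end Aux

/-- If `ψ_k(T) = 1` and `T_v` is a properly rooted subtree of the tree `T` rooted at `r`,
then `{v}` is a `k`-path vertex cover of `T`. -/
theorem properly_rooted_psi_one {V : Type*} [Fintype V] (T : SimpleGraph V)
    (hT : T.IsTree) (k : ℕ) (hk : 2 ≤ k) (r v : V)
    (hpsi : psi T k = 1) (hpr : ProperlyRooted T k r v) :
    IsKPVC T k ({v} : Set V) := by
  classical
  -- extract a singleton cover {w}
  have hne : {s : ℕ | ∃ I : Set V, IsKPVC T k I ∧ I.ncard = s}.Nonempty := by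
    refine ⟨(Set.univ : Set V).ncard, Set.univ, ?_, rfl⟩
    intro a b p hp hlen
    exact ⟨a, p.start_mem_support, trivial⟩
  have hmem := Nat.sInf_mem hne
  rw [show sInf {s : ℕ | ∃ I : Set V, IsKPVC T k I ∧ I.ncard = s} = psi T k from rfl,
    hpsi] at hmem
  obtain ⟨I, hI, hI1⟩ := hmem
  obtain ⟨w, rfl⟩ := Set.ncard_eq_one.mp hI1
  -- w is in Desc T r v
  obtain ⟨⟨a, ha⟩, ⟨b, hb⟩, q, hq, hqlen⟩ := hpr.1
  have hinj : Function.Injective (((@SimpleGraph.Embedding.induce V T (Desc T r v))).toHom) :=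
    ((@SimpleGraph.Embedding.induce V T (Desc T r v))).injective
  have hq' : (q.map ((@SimpleGraph.Embedding.induce V T (Desc T r v))).toHom).IsPath :=
    SimpleGraph.Walk.map_isPath_of_injective hinj hq
  obtain ⟨x, hx1, hx2⟩ := hI _ hq' (by rw [SimpleGraph.Walk.length_map]; exact hqlen)
  rw [Set.mem_singleton_iff] at hx2
  subst hx2
  rw [SimpleGraph.Walk.support_map, List.mem_map] at hx1
  obtain ⟨⟨x, hxd⟩, _, rfl⟩ := hx1
  -- main argument
  intro u u' p hp hlen
  by_contra hvp
  push_neg at hvp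
  have hv : v ∉ p.support := by
    intro hv; exact (hvp v hv) rfl
  -- w ∈ p.support
  obtain ⟨y, hy1, hy2⟩ := hI p hp hlen
  rw [Set.mem_singleton_iff] at hy2
  subst hy2
  -- all support of p is in Desc \ {v}
  have hall : ∀ z ∈ p.support, z ∈ Desc T r v \ {v} := by
    intro z hz
    refine ⟨?_, fun hzv => hv (hzv ▸ hz)⟩
    -- split p at w=x
    have hsp := p.take_spec hy1
    have hv1 : v ∉ (p.takeUntil _ hy1).support :=
      fun h => hv (p.support_takeUntil_subset hy1 h)
    have hv2 : v ∉ (p.dropUntil _ hy1).support :=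
      fun h => hv (p.support_dropUntil_subset hy1 h)
    have h1 : ∀ z ∈ (p.takeUntil _ hy1).support, z ∈ Desc T r v := by
      have := desc_walk (p.takeUntil _ hy1).reverse
        (by rwa [SimpleGraph.Walk.support_reverse, List.mem_reverse]) hxd
      intro z hz
      exact this z (by rwa [SimpleGraph.Walk.support_reverse, List.mem_reverse])
    have h2 : ∀ z ∈ (p.dropUntil _ hy1).support, z ∈ Desc T r v :=
      desc_walk (p.dropUntil _ hy1) hv2 hxd
    rw [← hsp, SimpleGraph.Walk.support_append, List.mem_append] at hz
    rcases hz with hz | hz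
    · exact h1 z hz
    · exact h2 z (List.mem_of_mem_tail hz)
  obtain ⟨q', hq'1, hq'2⟩ := walk_induce p hall
  have hq'path : q'.IsPath := by
    rw [SimpleGraph.Walk.isPath_def]
    have := hp.support_nodup
    rw [← hq'1] at this
    exact this.of_map _
  exact hpr.2 ⟨_, _, q', hq'path, by rw [hq'2]; exact hlen⟩
end

section
/- Let G be a graph, and let G' be obtained from G by attaching to each vertex x of G a new pendant path P^x on ⌊(k−1)/2⌋ vertices (joining x to one endpoint of P^x). Then every vertex cover of G is a k-path vertex cover of G'. -/
/-- The graph `G'` obtained from `G` by attaching to each vertex `x` a pendant path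
`P^x` on `m` new vertices `(x, 0), …, (x, m-1)`, joined to `G` through `x`. -/
def GPrime {V : Type*} (G : SimpleGraph V) (m : ℕ) : SimpleGraph (V ⊕ V × Fin m) where
  Adj a b :=
    match a, b with
    | Sum.inl u, Sum.inl w => G.Adj u w
    | Sum.inl u, Sum.inr p => u = p.1 ∧ (p.2 : ℕ) = 0
    | Sum.inr p, Sum.inl u => u = p.1 ∧ (p.2 : ℕ) = 0
    | Sum.inr p, Sum.inr q => p.1 = q.1 ∧ ((p.2 : ℕ) + 1 = q.2 ∨ (q.2 : ℕ) + 1 = p.2)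
  symm := by
    constructor
    rintro (u | p) (w | q) h
    · exact G.adj_symm h
    · exact h
    · exact h
    · exact ⟨h.1.symm, h.2.symm⟩
  loopless := by
    constructor
    rintro (u | p) h
    · exact G.irrefl h
    · rcases h with ⟨-, h⟩; omega

/-- Projection to the base vertex. -/
def gproj {V : Type*} {m : ℕ} : V ⊕ V × Fin m → V := Sum.elim id Prod.fst

lemma gproj_eq_of_adj {V : Type*} {G : SimpleGraph V} {m : ℕ} {a b : V ⊕ V × Fin m}
    (h : (GPrime G m).Adj a b) (hnl : ¬ ∃ u w, a = Sum.inl u ∧ b = Sum.inl w) :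
    gproj a = gproj b := by
  rcases a with u | p <;> rcases b with w | q
  · exact absurd ⟨u, w, rfl, rfl⟩ hnl
  · exact h.1
  · exact h.1.symm
  · exact h.1

lemma gproj_const {V : Type*} {G : SimpleGraph V} {m : ℕ} {a b : V ⊕ V × Fin m}
    (p : (GPrime G m).Walk a b)
    (h : ∀ d ∈ p.darts, ¬ ∃ u w, d.fst = Sum.inl u ∧ d.snd = Sum.inl w) :
    ∀ v ∈ p.support, gproj v = gproj a := by
  induction p with
  | nil => intro v hv; simp at hv; subst hv; rfl
  | cons hadj q ih =>
    intro v hv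
    rw [SimpleGraph.Walk.support_cons] at hv
    rcases List.mem_cons.1 hv with rfl | hv
    · rfl
    · have h1 : gproj _ = gproj _ :=
        gproj_eq_of_adj hadj (h ⟨(_, _), hadj⟩ (by simp [SimpleGraph.Walk.darts_cons]))
      rw [ih (fun d hd => h d (by simp [SimpleGraph.Walk.darts_cons, hd])) v hv, ← h1]

/-- Every vertex cover of `G` is a `k`-path vertex cover of the graph `G'` obtained from
`G` by attaching a pendant path on `⌊(k−1)/2⌋` vertices to each vertex. -/
theorem vertexCover_isKPVC_gprime {V : Type*} (G : SimpleGraph V) (k : ℕ) (hk : 2 ≤ k)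
    (I : Set V) (hI : ∀ ⦃u v : V⦄, G.Adj u v → u ∈ I ∨ v ∈ I) :
    IsKPVC (GPrime G ((k - 1) / 2)) k (Sum.inl '' I) := by
  intro a b p hp hlen
  set m := (k - 1) / 2 with hm
  by_cases hd : ∃ d ∈ p.darts, ∃ u w, d.fst = Sum.inl u ∧ d.snd = Sum.inl w
  · obtain ⟨d, hdmem, u, w, hfst, hsnd⟩ := hd
    have hadj : (GPrime G m).Adj d.fst d.snd := d.adj
    rw [hfst, hsnd] at hadj
    have hG : G.Adj u w := hadj
    rcases hI hG with hu | hw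
    · exact ⟨Sum.inl u, hfst ▸ p.dart_fst_mem_support_of_mem_darts hdmem, ⟨u, hu, rfl⟩⟩
    · exact ⟨Sum.inl w, hsnd ▸ p.dart_snd_mem_support_of_mem_darts hdmem, ⟨w, hw, rfl⟩⟩
  · exfalso
    push_neg at hd
    have hconst := gproj_const p (fun d hm he => hd d hm he.choose he.choose_spec.choose
      he.choose_spec.choose_spec.1 he.choose_spec.choose_spec.2)
    -- map support into Option (Fin m) injectively
    set g : V ⊕ V × Fin m → Option (Fin m) := Sum.elim (fun _ => none) (fun q => some q.2)
      with hg
    have hnodup : (p.support.map g).Nodup := by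
      refine hp.support_nodup.map_on ?_
      intro x hx y hy hxy
      have hx' := hconst x hx
      have hy' := hconst y hy
      rcases x with u | q <;> rcases y with u' | q' <;> simp [hg] at hxy ⊢
      · simp [gproj] at hx' hy'; rw [hx', hy']
      · simp [gproj] at hx' hy'
        exact Prod.ext (hx'.trans hy'.symm) hxy
    have hle := hnodup.length_le_card
    simp only [List.length_map, SimpleGraph.Walk.length_support] at hle
    have hcard : Fintype.card (Option (Fin m)) = m + 1 := by simp
    rw [hcard, hlen] at hle
    omega
end

section
/- Let G be a graph and G' be obtained from G by attaching to each vertex x of G a pendant path P^x on ⌊(k−1)/2⌋ new vertices. If I' is a minimum k-path vertex cover of G' that contains a vertex y belonging to some attached path P^x, then (I' \ {y}) ∪ {x} is also a minimum k-path vertex cover of G'. -/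
lemma pendant_closed {V : Type*} (G : SimpleGraph V) {m : ℕ} (x : V)
    {a b : V ⊕ V × Fin m} (hab : (GPrime G m).Adj a b)
    (ha : ∃ j, a = Sum.inr (x, j)) (hb : b ≠ Sum.inl x) :
    ∃ j, b = Sum.inr (x, j) := by
  obtain ⟨j, rfl⟩ := ha
  cases b with
  | inl u =>
    have : u = x := by
      simpa [GPrime] using hab.1
    exact absurd (congrArg Sum.inl this) hb
  | inr q =>
    have h1 : x = q.1 := by
      have h2 := hab
      simp only [GPrime] at h2
      exact h2.1
    exact ⟨q.2, by rw [h1]⟩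

lemma walk_in_pendant {V : Type*} (G : SimpleGraph V) {m : ℕ} (x : V)
    {w v : V ⊕ V × Fin m} (q : (GPrime G m).Walk w v)
    (hw : ∃ j, w = Sum.inr (x, j)) (hx : Sum.inl x ∉ q.support) :
    ∀ a ∈ q.support, ∃ j, a = Sum.inr (x, j) := by
  induction q with
  | nil =>
    intro a ha
    rw [SimpleGraph.Walk.support_nil, List.mem_singleton] at ha
    exact ha ▸ hw
  | @cons u w' v h q ih =>
    intro a ha
    rw [SimpleGraph.Walk.support_cons] at hx ha
    have hx' : Sum.inl x ∉ q.support := fun h' => hx (List.mem_cons_of_mem _ h')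
    have hw' : ∃ j, w' = Sum.inr (x, j) :=
      pendant_closed G x h hw (fun h' => hx' (h' ▸ q.start_mem_support))
    rcases List.mem_cons.mp ha with rfl | ha
    · exact hw
    · exact ih hw' hx' a ha

lemma key_fact {V : Type*} (G : SimpleGraph V) {m : ℕ} (x : V) (i : Fin m)
    {u v : V ⊕ V × Fin m} (p : (GPrime G m).Walk u v)
    (hi : Sum.inr (x, i) ∈ p.support) (hx : Sum.inl x ∉ p.support) :
    ∀ a ∈ p.support, ∃ j, a = Sum.inr (x, j) := by
  classical
  intro a ha
  have hsplit := p.take_spec hi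
  rw [← hsplit, SimpleGraph.Walk.mem_support_append_iff] at ha
  have hxt : Sum.inl x ∉ (p.takeUntil _ hi).support :=
    fun h => hx (p.support_takeUntil_subset hi h)
  have hxd : Sum.inl x ∉ (p.dropUntil _ hi).support :=
    fun h => hx (p.support_dropUntil_subset hi h)
  rcases ha with ha | ha
  · have := walk_in_pendant G x (p.takeUntil _ hi).reverse ⟨i, rfl⟩
      (by rwa [SimpleGraph.Walk.support_reverse, List.mem_reverse])
    exact this a (by rwa [SimpleGraph.Walk.support_reverse, List.mem_reverse])
  · exact walk_in_pendant G x (p.dropUntil _ hi) ⟨i, rfl⟩ hxd a ha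

/-- If a minimum `k`-path vertex cover `I'` of `G'` contains a vertex `y = (x, i)` of an
attached path `P^x`, then `(I' \ {y}) ∪ {x}` is also a minimum `k`-path vertex cover. -/
theorem min_cover_pendant_swap {V : Type*} [Fintype V] (G : SimpleGraph V) (k : ℕ)
    (hk : 2 ≤ k) (I' : Set (V ⊕ V × Fin ((k - 1) / 2)))
    (hcov : IsKPVC (GPrime G ((k - 1) / 2)) k I')
    (hmin : ∀ J : Set (V ⊕ V × Fin ((k - 1) / 2)),
      IsKPVC (GPrime G ((k - 1) / 2)) k J → I'.ncard ≤ J.ncard)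
    (x : V) (i : Fin ((k - 1) / 2)) (hy : Sum.inr (x, i) ∈ I') :
    IsKPVC (GPrime G ((k - 1) / 2)) k (insert (Sum.inl x) (I' \ {Sum.inr (x, i)})) ∧
    ∀ J : Set (V ⊕ V × Fin ((k - 1) / 2)), IsKPVC (GPrime G ((k - 1) / 2)) k J →
      (insert (Sum.inl x) (I' \ {Sum.inr (x, i)})).ncard ≤ J.ncard := by
  classical
  constructor
  · intro u v p hp hlen
    obtain ⟨z, hz, hzI⟩ := hcov p hp hlen
    by_cases hzy : z = Sum.inr (x, i)
    · subst hzy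
      rcases Classical.em ((Sum.inl x : V ⊕ V × Fin ((k-1)/2)) ∈ p.support) with hxs | hxs
      · exact ⟨Sum.inl x, hxs, Set.mem_insert _ _⟩
      · exfalso
        have hall := key_fact G x i p hz hxs
        have hnd : p.support.Nodup := hp.support_nodup
        have hcard : p.support.toFinset.card = k := by
          rw [List.toFinset_card_of_nodup hnd, SimpleGraph.Walk.length_support, hlen]
        have hsub : p.support.toFinset ⊆
            Finset.univ.image (fun j : Fin ((k-1)/2) => (Sum.inr (x, j) : V ⊕ V × Fin ((k-1)/2))) := by
          intro a ha
          rw [List.mem_toFinset] at ha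
          obtain ⟨j, rfl⟩ := hall a ha
          exact Finset.mem_image.mpr ⟨j, Finset.mem_univ _, rfl⟩
        have hle : k ≤ (k-1)/2 := by
          calc k = p.support.toFinset.card := hcard.symm
            _ ≤ _ := Finset.card_le_card hsub
            _ ≤ Finset.univ.card := Finset.card_image_le
            _ = (k-1)/2 := by simp
        omega
    · exact ⟨z, hz, Set.mem_insert_of_mem _ ⟨hzI, hzy⟩⟩
  · intro J hJ
    calc (insert (Sum.inl x) (I' \ {Sum.inr (x, i)})).ncard
        ≤ (I' \ {Sum.inr (x, i)}).ncard + 1 := Set.ncard_insert_le _ _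
      _ = I'.ncard := Set.ncard_diff_singleton_add_one hy (Set.toFinite _)
      _ ≤ J.ncard := hmin J hJ
end

section
/- Let G be a graph, and let I_i and I_{i+1} be minimum vertex covers of G with I_i \ I_{i+1} = {x} and I_{i+1} \ I_i = {y}. Then x and y are adjacent in G. -/
/-- If two minimum vertex covers `I` and `J` of `G` satisfy `I \ J = {x}` and
`J \ I = {y}`, then `x` and `y` are adjacent in `G`. -/
theorem min_vc_jump_is_slide {V : Type*} [Fintype V] [DecidableEq V]
    (G : SimpleGraph V) (I J : Finset V) (x y : V)
    (hIvc : ∀ ⦃u v : V⦄, G.Adj u v → u ∈ I ∨ v ∈ I)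
    (hImin : ∀ K : Finset V, (∀ ⦃u v : V⦄, G.Adj u v → u ∈ K ∨ v ∈ K) → I.card ≤ K.card)
    (hJvc : ∀ ⦃u v : V⦄, G.Adj u v → u ∈ J ∨ v ∈ J)
    (hJmin : ∀ K : Finset V, (∀ ⦃u v : V⦄, G.Adj u v → u ∈ K ∨ v ∈ K) → J.card ≤ K.card)
    (h1 : I \ J = {x}) (h2 : J \ I = {y}) :
    G.Adj x y := by
  by_contra hxy
  have hxI : x ∈ I ∧ x ∉ J := by
    have : x ∈ I \ J := by rw [h1]; simp
    simpa [Finset.mem_sdiff] using this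
  have hcov : ∀ ⦃u v : V⦄, G.Adj u v → u ∈ I ∩ J ∨ v ∈ I ∩ J := by
    intro u v huv
    have key : ∀ ⦃a b : V⦄, G.Adj a b → a ∈ I → a ∉ J → b ∈ I ∩ J := by
      intro a b hab haI haJ
      have haX : a = x := by
        have : a ∈ I \ J := Finset.mem_sdiff.2 ⟨haI, haJ⟩
        simpa [h1] using this
      have hbJ : b ∈ J := by
        rcases hJvc hab with h | h
        · exact absurd h haJ
        · exact h
      have hbI : b ∈ I := by
        by_contra hbI
        have : b ∈ J \ I := Finset.mem_sdiff.2 ⟨hbJ, hbI⟩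
        have hbY : b = y := by simpa [h2] using this
        exact hxy (haX ▸ hbY ▸ hab)
      exact Finset.mem_inter.2 ⟨hbI, hbJ⟩
    rcases hIvc huv with hu | hv
    · by_cases huJ : u ∈ J
      · exact Or.inl (Finset.mem_inter.2 ⟨hu, huJ⟩)
      · exact Or.inr (key huv hu huJ)
    · by_cases hvJ : v ∈ J
      · exact Or.inr (Finset.mem_inter.2 ⟨hv, hvJ⟩)
      · exact Or.inl (key huv.symm hv hvJ)
  have hlt : (I ∩ J).card < I.card := by
    apply Finset.card_lt_card
    constructor
    · exact Finset.inter_subset_left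
    · intro hsub
      exact hxI.2 (Finset.mem_inter.1 (hsub hxI.1)).2
  exact absurd (hImin _ hcov) (not_le.2 hlt)
end
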